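/- Let L > 0, t₀ ≥ 1, β ∈ (0,2), η > 0, and define step sizes η_t = η/(t+t₀)^β for t ∈ ℕ. Assume η₀L < 1/4. Define α₀ = √(η₀L) and, recursively, α_{t+1} as the unique solution in (0,1) of α_{t+1}² = (η_{t+1}/η_t)(1−α_{t+1})α_t², and define λ_t = Π_{k=0}^{t−1}(1−α_k). Then: (i) α_t ≤ 2/(t+1) for all t; (ii) there exists C > 0 such that λ_t ≤ C/t^{2−β} for all t ≥ 1; (iii) for all t, λ_t ≥ D(β,t₀)/(t+t₀)^{2−β}, where D(β,t₀) = 1/( (t₀+3)²·e^{16 + 6/(2−β)} ). -/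

import Mathlib

set_option maxHeartbeats 800000

lemma stmt16_term_bound {b a : ℝ} (hb0 : 0 < b) (hb1 : b < 1) (ha : 1 ≤ a) :
    1 / a ^ b ≤ 2 / (1 - b) * ((a + 1) ^ (1 - b) - a ^ (1 - b)) := by
  have ha0 : (0:ℝ) < a := lt_of_lt_of_le one_pos ha
  have ha1 : (0:ℝ) < a + 1 := by linarith
  set e : ℝ := 1 - b with hedef
  have he0 : 0 < e := by simp only [hedef]; linarith
  have hy0 : (0:ℝ) ≤ a / (a + 1) := by positivity
  have h1 : (a / (a + 1)) ^ e * (1:ℝ) ^ b ≤ e * (a / (a + 1)) + b * 1 :=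
    Real.geom_mean_le_arith_mean2_weighted he0.le hb0.le hy0 zero_le_one (by simp [hedef])
  rw [Real.one_rpow, mul_one, mul_one] at h1
  have hae : a ^ e = (a / (a + 1)) ^ e * (a + 1) ^ e := by
    rw [← Real.mul_rpow hy0 ha1.le]
    congr 1
    field_simp
  have hP : 0 < (a + 1) ^ e := Real.rpow_pos_of_pos ha1 e
  have hQ : 0 < a ^ e := Real.rpow_pos_of_pos ha0 e
  have hR : 0 < (a + 1) ^ b := Real.rpow_pos_of_pos ha1 b
  have hS : 0 < a ^ b := Real.rpow_pos_of_pos ha0 b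
  have h2 : a ^ e ≤ (1 - e / (a + 1)) * (a + 1) ^ e := by
    rw [hae]
    have hc : e * (a / (a + 1)) + b = 1 - e / (a + 1) := by
      field_simp
      ring
    have := mul_le_mul_of_nonneg_right h1 hP.le
    rw [hc] at this
    exact this
  have f2 : (a + 1) ^ e * (a + 1) ^ b = a + 1 := by
    rw [← Real.rpow_add ha1]
    simp [hedef]
  have f3 : (a + 1) ^ b ≤ 2 * a ^ b := by
    calc (a + 1) ^ b ≤ (2 * a) ^ b :=
          Real.rpow_le_rpow ha1.le (by linarith) hb0.le
      _ = 2 ^ b * a ^ b := Real.mul_rpow (by norm_num) ha0.le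
      _ ≤ 2 * a ^ b := by
          have h2b : (2:ℝ) ^ b ≤ 2 ^ (1:ℝ) :=
            Real.rpow_le_rpow_of_exponent_le one_le_two hb1.le
          rw [Real.rpow_one] at h2b
          exact mul_le_mul_of_nonneg_right h2b hS.le
  -- from h2: (a+1)*((a+1)^e - a^e) ≥ e*(a+1)^e
  have f1 : e * (a + 1) ^ e ≤ (a + 1) * ((a + 1) ^ e - a ^ e) := by
    have := mul_le_mul_of_nonneg_right h2 ha1.le
    have hc : (1 - e / (a + 1)) * (a + 1) ^ e * (a + 1)
        = (a + 1) * (a + 1) ^ e - e * (a + 1) ^ e := by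
      field_simp
    rw [hc] at this
    nlinarith
  have hPQ : 0 < (a + 1) ^ e - a ^ e := by nlinarith
  have g2 : e ≤ (a + 1) ^ b * ((a + 1) ^ e - a ^ e) := by
    have g1 : e * (a + 1) ^ e ≤ ((a + 1) ^ e * (a + 1) ^ b) * ((a + 1) ^ e - a ^ e) := by
      rw [f2]; exact f1
    refine le_of_mul_le_mul_left ?_ hP
    nlinarith [g1]
  have g3 : e ≤ 2 * a ^ b * ((a + 1) ^ e - a ^ e) := by
    nlinarith [mul_le_mul_of_nonneg_right f3 hPQ.le]
  rw [div_le_iff₀ hS, div_mul_eq_mul_div, div_mul_eq_mul_div, le_div_iff₀ he0]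
  nlinarith [g3]


lemma stmt16_step {x a n : ℝ} (hx0 : 0 < x) (hx1 : x < 1) (hn : 0 ≤ n)
    (ha : 0 ≤ a) (ha2 : a ≤ 2 / (n + 2)) (hsq : x ^ 2 ≤ (1 - x) * a ^ 2) :
    x ≤ 2 / (n + 3) := by
  have h4 : (0:ℝ) < n + 2 := by linarith
  have h5 : (0:ℝ) < n + 3 := by linarith
  have ha2' : a ^ 2 ≤ (2 / (n + 2)) ^ 2 := by nlinarith
  have hsq' : x ^ 2 * (n + 2) ^ 2 ≤ 4 * (1 - x) := by
    have h6 : x ^ 2 ≤ (1 - x) * (2 / (n + 2)) ^ 2 := by nlinarith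
    have h7 : (2 / (n + 2)) ^ 2 * (n + 2) ^ 2 = 4 := by
      field_simp
      norm_num
    nlinarith
  rw [le_div_iff₀ h5]
  by_contra hc
  push_neg at hc
  have k1 : 0 < x * (n + 3) - 2 := by linarith
  nlinarith [mul_le_mul_of_nonneg_right hsq' (sq_nonneg (n + 3)),
    mul_nonneg (mul_nonneg k1.le (mul_pos hx0 h5).le) (sq_nonneg (n + 2)),
    mul_pos k1 (show (0:ℝ) < 2 * (n + 2) ^ 2 + 4 * (n + 3) by positivity), hn]

lemma stmt16_numeric {u s : ℝ} (hu : 1 ≤ u) (hs : 0 < s) :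
    1 + 4 * u * s ≤ (u + 3) * Real.exp (8 + 3 * s) := by
  have h2 : (9:ℝ) ≤ Real.exp 8 := by nlinarith [Real.add_one_le_exp (8:ℝ)]
  have h3 : 1 + 3 * s ≤ Real.exp (3 * s) := by linarith [Real.add_one_le_exp (3 * s)]
  have h4 : (0:ℝ) < Real.exp (3 * s) := Real.exp_pos _
  have h5 : 9 * (1 + 3 * s) ≤ Real.exp 8 * Real.exp (3 * s) :=
    mul_le_mul h2 h3 (by linarith) (by linarith)
  have h6 : (u + 3) * (9 * (1 + 3 * s)) ≤ (u + 3) * (Real.exp 8 * Real.exp (3 * s)) :=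
    mul_le_mul_of_nonneg_left h5 (by linarith)
  rw [Real.exp_add]
  nlinarith [mul_nonneg (by linarith : (0:ℝ) ≤ u) hs.le]

theorem stmt_16 (L t₀ β η : ℝ) (hL : 0 < L) (ht₀ : 1 ≤ t₀) (hβ0 : 0 < β) (hβ2 : β < 2)
    (hη : 0 < η)
    (ηs : ℕ → ℝ) (hηs : ∀ t : ℕ, ηs t = η / ((t : ℝ) + t₀) ^ β)
    (hη0L : ηs 0 * L < 1 / 4)
    (α : ℕ → ℝ) (hα0 : α 0 = Real.sqrt (ηs 0 * L))
    (hαmem : ∀ t : ℕ, α (t + 1) ∈ Set.Ioo (0 : ℝ) 1)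
    (hαrec : ∀ t : ℕ, α (t + 1) ^ 2 = ηs (t + 1) / ηs t * (1 - α (t + 1)) * α t ^ 2)
    (lam : ℕ → ℝ) (hlam : ∀ t : ℕ, lam t = ∏ k ∈ Finset.range t, (1 - α k)) :
    (∀ t : ℕ, α t ≤ 2 / ((t : ℝ) + 1)) ∧
    (∃ C > 0, ∀ t : ℕ, 1 ≤ t → lam t ≤ C / (t : ℝ) ^ (2 - β)) ∧
    (∀ t : ℕ, lam t ≥
      (1 / ((t₀ + 3) ^ 2 * Real.exp (16 + 6 / (2 - β)))) / ((t : ℝ) + t₀) ^ (2 - β)) := by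
  have ht₀0 : (0:ℝ) < t₀ := lt_of_lt_of_le one_pos ht₀
  have hTpos : ∀ t : ℕ, (0:ℝ) < (t:ℝ) + t₀ := fun t => by positivity
  have hT1 : ∀ t : ℕ, (1:ℝ) ≤ (t:ℝ) + t₀ := fun t => by
    have : (0:ℝ) ≤ (t:ℝ) := Nat.cast_nonneg t
    linarith
  have hTbpos : ∀ t : ℕ, (0:ℝ) < ((t:ℝ) + t₀) ^ β := fun t => Real.rpow_pos_of_pos (hTpos t) β
  have hηpos : ∀ t : ℕ, 0 < ηs t := fun t => by rw [hηs]; positivity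
  have hη0Lpos : 0 < ηs 0 * L := mul_pos (hηpos 0) hL
  have hα0pos : 0 < α 0 := by rw [hα0]; exact Real.sqrt_pos.mpr hη0Lpos
  have hα0half : α 0 < 1 / 2 := by
    rw [hα0]
    refine (Real.sqrt_lt' (by norm_num)).mpr ?_
    nlinarith
  have hαpos : ∀ t : ℕ, 0 < α t := by
    intro t
    cases t with
    | zero => exact hα0pos
    | succ n => exact (hαmem n).1
  have hαlt1 : ∀ t : ℕ, α t < 1 := by
    intro t
    cases t with
    | zero => linarith
    | succ n => exact (hαmem n).2
  have hηsmono : ∀ t : ℕ, ηs (t + 1) ≤ ηs t := by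
    intro t
    rw [hηs, hηs]
    apply div_le_div_of_nonneg_left hη.le (hTbpos t)
    apply Real.rpow_le_rpow (hTpos t).le (by push_cast; linarith) hβ0.le
  have hrle1 : ∀ t : ℕ, ηs (t + 1) / ηs t ≤ 1 :=
    fun t => div_le_one_of_le₀ (hηsmono t) (hηpos t).le
  have hrpos : ∀ t : ℕ, 0 < ηs (t + 1) / ηs t :=
    fun t => div_pos (hηpos (t + 1)) (hηpos t)
  have hαdec : ∀ t : ℕ, α (t + 1) ≤ α t := by
    intro t
    have h := hαrec t
    have hr1 : ηs (t + 1) / ηs t * (1 - α (t + 1)) ≤ 1 := by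
      have := (hαmem t).1
      have := (hαmem t).2
      have := hrpos t
      nlinarith [hrle1 t]
    have h1 : α (t + 1) ^ 2 ≤ α t ^ 2 := by
      rw [h]
      nlinarith [mul_le_mul_of_nonneg_right hr1 (sq_nonneg (α t))]
    nlinarith [hαpos (t + 1), hαpos t]
  have hαhalf : ∀ t : ℕ, α t ≤ 1 / 2 := by
    intro t
    induction t with
    | zero => linarith
    | succ n ih => linarith [hαdec n]
  -- Part (i)
  have part1 : ∀ t : ℕ, α t ≤ 2 / ((t:ℝ) + 1) := by
    intro t
    induction t with
    | zero => simpa using by linarith [hα0half]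
    | succ n ih =>
      cases n with
      | zero =>
        have h1 := (hαmem 0).2
        push_cast
        linarith
      | succ m =>
        have hrec := hαrec (m + 1)
        have hx0 : 0 < α (m + 1 + 1) := (hαmem (m + 1)).1
        have hx1 : α (m + 1 + 1) < 1 := (hαmem (m + 1)).2
        have hr1 : ηs (m + 1 + 1) / ηs (m + 1) * (1 - α (m + 1 + 1)) ≤ 1 - α (m + 1 + 1) := by
          have h1 := hrle1 (m + 1)
          have h2 := hrpos (m + 1)
          nlinarith
        have hsq : α (m + 1 + 1) ^ 2 ≤ (1 - α (m + 1 + 1)) * α (m + 1) ^ 2 := by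
          rw [hrec]
          exact mul_le_mul_of_nonneg_right hr1 (sq_nonneg (α (m + 1)))
        have ih' : α (m + 1) ≤ 2 / ((m : ℝ) + 2) := by
          push_cast at ih
          convert ih using 2
          ring
        have key := stmt16_step hx0 hx1 (Nat.cast_nonneg m) (hαpos (m + 1)).le ih' hsq
        push_cast
        push_cast at key
        convert key using 2
        ring
  -- lam facts
  have hlam0 : lam 0 = 1 := by simp [hlam]
  have hlamsucc : ∀ t : ℕ, lam (t + 1) = lam t * (1 - α t) := by
    intro t
    rw [hlam, hlam, Finset.prod_range_succ]
  have hlampos : ∀ t : ℕ, 0 < lam t := by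
    intro t
    induction t with
    | zero => rw [hlam0]; norm_num
    | succ n ih =>
      rw [hlamsucc n]
      exact mul_pos ih (by linarith [hαlt1 n])
  -- key identity
  have hid : ∀ t : ℕ, α t ^ 2 * (1 - α 0) = ηs t * L * lam (t + 1) := by
    intro t
    induction t with
    | zero =>
      rw [hlamsucc 0, hlam0, hα0, Real.sq_sqrt hη0Lpos.le]
      ring
    | succ n ih =>
      have h := hαrec n
      rw [hlamsucc (n + 1)]
      have hηn : ηs n ≠ 0 := (hηpos n).ne'
      calc α (n + 1) ^ 2 * (1 - α 0)
          = ηs (n + 1) / ηs n * (1 - α (n + 1)) * (α n ^ 2 * (1 - α 0)) := by rw [h]; ring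
        _ = ηs (n + 1) / ηs n * (1 - α (n + 1)) * (ηs n * L * lam (n + 1)) := by rw [ih]
        _ = ηs (n + 1) * L * (lam (n + 1) * (1 - α (n + 1))) := by
            field_simp
  have hηL : 0 < η * L := mul_pos hη hL
  have h1t₀ : (0:ℝ) < 1 + t₀ := by linarith
  have h1t₀b : 0 < (1 + t₀) ^ β := Real.rpow_pos_of_pos h1t₀ β
  refine ⟨part1, ⟨4 * (1 + t₀) ^ β / (η * L), div_pos (by positivity) hηL, ?_⟩, ?_⟩
  · -- Part (ii)
    intro t ht
    obtain ⟨q, rfl⟩ : ∃ q, t = q + 1 := ⟨t - 1, (Nat.succ_pred_eq_of_pos ht).symm⟩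
    have hηsL : 0 < ηs q * L := mul_pos (hηpos q) hL
    have h1 : lam (q + 1) ≤ α q ^ 2 / (ηs q * L) := by
      rw [le_div_iff₀ hηsL]
      nlinarith [hid q, mul_nonneg (sq_nonneg (α q)) hα0pos.le]
    set N : ℝ := (q : ℝ) + 1 with hNdef
    clear_value N
    have hN1 : (1:ℝ) ≤ N := by
      rw [hNdef]
      have : (0:ℝ) ≤ (q:ℝ) := Nat.cast_nonneg q
      linarith
    have hNpos : (0:ℝ) < N := by linarith
    have hα2 : α q ^ 2 ≤ 4 / N ^ 2 := by
      have h : α q ≤ 2 / N := hNdef ▸ part1 q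
      have h0 := hαpos q
      have : α q ^ 2 ≤ (2 / N) ^ 2 := pow_le_pow_left₀ h0.le h 2
      calc α q ^ 2 ≤ (2 / N) ^ 2 := this
        _ = 4 / N ^ 2 := by rw [div_pow]; norm_num
    have h2 : α q ^ 2 / (ηs q * L) = α q ^ 2 * ((q : ℝ) + t₀) ^ β / (η * L) := by
      rw [hηs q]
      field_simp
    have h3 : ((q : ℝ) + t₀) ^ β ≤ N ^ β * (1 + t₀) ^ β := by
      rw [← Real.mul_rpow hNpos.le h1t₀.le]
      apply Real.rpow_le_rpow (hTpos q).le ?_ hβ0.le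
      have hq0 : (0:ℝ) ≤ (q:ℝ) := Nat.cast_nonneg q
      simp only [hNdef]
      nlinarith
    have hNb : 0 < N ^ β := Real.rpow_pos_of_pos hNpos β
    have h4 : lam (q + 1) ≤ 4 * (1 + t₀) ^ β * N ^ β / (N ^ 2 * (η * L)) := by
      calc lam (q + 1) ≤ α q ^ 2 / (ηs q * L) := h1
        _ = α q ^ 2 * ((q : ℝ) + t₀) ^ β / (η * L) := h2
        _ ≤ (4 / N ^ 2) * (N ^ β * (1 + t₀) ^ β) / (η * L) := by
            apply div_le_div_of_nonneg_right ?_ hηL.le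
            apply mul_le_mul hα2 h3 (Real.rpow_nonneg (hTpos q).le β) (by positivity)
        _ = 4 * (1 + t₀) ^ β * N ^ β / (N ^ 2 * (η * L)) := by
            field_simp
    have key : N ^ (2 - β) * N ^ β = N ^ 2 := by
      rw [← Real.rpow_add hNpos]
      rw [show (2 - β + β : ℝ) = ((2:ℕ):ℝ) by push_cast; ring, Real.rpow_natCast]
    have hN2β : 0 < N ^ (2 - β) := Real.rpow_pos_of_pos hNpos _
    have heq : 4 * (1 + t₀) ^ β / (η * L) / N ^ (2 - β)
        = 4 * (1 + t₀) ^ β * N ^ β / (N ^ 2 * (η * L)) := by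
      rw [div_div, div_eq_div_iff (by positivity) (by positivity)]
      linear_combination (-4 * (1 + t₀) ^ β * (η * L)) * key
    have hcast : ((q + 1 : ℕ) : ℝ) = N := by push_cast; rw [hNdef]
    rw [hcast, heq]
    exact h4
  · -- Part (iii)
    have h2β : (0:ℝ) < 2 - β := by linarith
    have hb0' : 0 < β / 2 := by linarith
    have hb1' : β / 2 < 1 := by linarith
    have he0 : (0:ℝ) < 1 - β / 2 := by linarith
    have h1mα0 : (1:ℝ) / 2 < 1 - α 0 := by linarith
    have h1mα0' : (0:ℝ) < 1 - α 0 := by linarith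
    obtain ⟨γ, hγdef⟩ : ∃ g : ℝ, g = η * L / (1 - α 0) := ⟨_, rfl⟩
    have hγpos : 0 < γ := by rw [hγdef]; exact div_pos hηL h1mα0'
    have hαsq : ∀ k : ℕ, α k ^ 2 = γ * lam (k + 1) / ((k : ℝ) + t₀) ^ β := by
      intro k
      have h := hid k
      rw [hηs k] at h
      rw [hγdef]
      field_simp [h1mα0'.ne', (hTbpos k).ne'] at h ⊢
      linear_combination h
    have hstep : ∀ k : ℕ, 1 / Real.sqrt (lam (k + 1))
        ≤ 1 / Real.sqrt (lam k) + Real.sqrt γ / ((k : ℝ) + t₀) ^ (β / 2) := by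
      intro k
      have h1a : 0 < 1 - α k := by linarith [hαlt1 k]
      have hp : 0 < lam k := hlampos k
      have hq : 0 < lam (k + 1) := hlampos (k + 1)
      have hsp : 0 < Real.sqrt (lam k) := Real.sqrt_pos.mpr hp
      have hsq2 : 0 < Real.sqrt (lam (k + 1)) := Real.sqrt_pos.mpr hq
      have hTb2 : 0 < ((k : ℝ) + t₀) ^ (β / 2) := Real.rpow_pos_of_pos (hTpos k) _
      have hsqrtmul : Real.sqrt (lam (k + 1)) = Real.sqrt (lam k) * Real.sqrt (1 - α k) := by
        rw [hlamsucc k, Real.sqrt_mul hp.le]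
      have hA : (1 - α k) / Real.sqrt (lam (k + 1)) ≤ 1 / Real.sqrt (lam k) := by
        have hs1 : 0 < Real.sqrt (1 - α k) := Real.sqrt_pos.mpr h1a
        have hs1le : Real.sqrt (1 - α k) ≤ 1 := Real.sqrt_le_one.mpr (by linarith [hαpos k])
        have hmss : Real.sqrt (1 - α k) * Real.sqrt (1 - α k) = 1 - α k :=
          Real.mul_self_sqrt h1a.le
        rw [div_le_div_iff₀ hsq2 hsp, hsqrtmul]
        nlinarith [mul_nonneg (mul_nonneg (sub_nonneg.mpr hs1le) hs1.le) hsp.le]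
      have hTβ : ((k : ℝ) + t₀) ^ β = (((k : ℝ) + t₀) ^ (β / 2)) ^ 2 := by
        rw [← Real.rpow_natCast (((k : ℝ) + t₀) ^ (β / 2)) 2, ← Real.rpow_mul (hTpos k).le]
        norm_num
      have hαk : α k = Real.sqrt γ * Real.sqrt (lam (k + 1)) / ((k : ℝ) + t₀) ^ (β / 2) := by
        have h1 : α k = Real.sqrt (α k ^ 2) := (Real.sqrt_sq (hαpos k).le).symm
        rw [h1, hαsq k, Real.sqrt_div (mul_nonneg hγpos.le hq.le),
          Real.sqrt_mul hγpos.le, hTβ, Real.sqrt_sq hTb2.le]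
      have hB : α k / Real.sqrt (lam (k + 1)) = Real.sqrt γ / ((k : ℝ) + t₀) ^ (β / 2) := by
        rw [hαk]
        field_simp
      calc 1 / Real.sqrt (lam (k + 1))
          = (1 - α k) / Real.sqrt (lam (k + 1)) + α k / Real.sqrt (lam (k + 1)) := by
            rw [← add_div, sub_add_cancel]
        _ ≤ 1 / Real.sqrt (lam k) + Real.sqrt γ / ((k : ℝ) + t₀) ^ (β / 2) :=
            add_le_add hA (le_of_eq hB)
    have hγs : (0:ℝ) ≤ Real.sqrt γ := Real.sqrt_nonneg γ
    have hF : ∀ t : ℕ, 1 / Real.sqrt (lam t)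
        ≤ 1 + Real.sqrt γ * (2 / (1 - β / 2))
            * (((t : ℝ) + t₀) ^ (1 - β / 2) - t₀ ^ (1 - β / 2)) := by
      intro t
      induction t with
      | zero =>
        rw [hlam0]
        norm_num
      | succ n ih =>
        have hterm : 1 / ((n : ℝ) + t₀) ^ (β / 2)
            ≤ 2 / (1 - β / 2) * ((((n : ℝ) + t₀) + 1) ^ (1 - β / 2)
                - ((n : ℝ) + t₀) ^ (1 - β / 2)) :=
          stmt16_term_bound hb0' hb1' (hT1 n)
        have hcast : ((n + 1 : ℕ) : ℝ) + t₀ = ((n : ℝ) + t₀) + 1 := by push_cast; ring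
        have h2 : Real.sqrt γ / ((n : ℝ) + t₀) ^ (β / 2)
            ≤ Real.sqrt γ * (2 / (1 - β / 2) * ((((n : ℝ) + t₀) + 1) ^ (1 - β / 2)
                - ((n : ℝ) + t₀) ^ (1 - β / 2))) := by
          rw [div_eq_mul_one_div]
          exact mul_le_mul_of_nonneg_left hterm hγs
        calc 1 / Real.sqrt (lam (n + 1))
            ≤ 1 / Real.sqrt (lam n) + Real.sqrt γ / ((n : ℝ) + t₀) ^ (β / 2) := hstep n
          _ ≤ (1 + Real.sqrt γ * (2 / (1 - β / 2))
                * (((n : ℝ) + t₀) ^ (1 - β / 2) - t₀ ^ (1 - β / 2)))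
              + Real.sqrt γ * (2 / (1 - β / 2) * ((((n : ℝ) + t₀) + 1) ^ (1 - β / 2)
                - ((n : ℝ) + t₀) ^ (1 - β / 2))) := add_le_add ih h2
          _ = 1 + Real.sqrt γ * (2 / (1 - β / 2))
                * ((((n + 1 : ℕ) : ℝ) + t₀) ^ (1 - β / 2) - t₀ ^ (1 - β / 2)) := by
              rw [hcast]; ring
    -- bound on sqrt γ
    have ht₀b : 0 < t₀ ^ β := Real.rpow_pos_of_pos ht₀0 β
    have hηs0 : ηs 0 = η / t₀ ^ β := by rw [hηs 0]; norm_num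
    have hηLb : η * L ≤ t₀ ^ β / 4 := by
      rw [hηs0, div_mul_eq_mul_div, div_lt_iff₀ ht₀b] at hη0L
      linarith
    have ht₀2 : t₀ ^ β ≤ t₀ ^ 2 := by
      have h := Real.rpow_le_rpow_of_exponent_le ht₀ hβ2.le
      rwa [show ((2:ℝ)) = ((2:ℕ):ℝ) by norm_num, Real.rpow_natCast] at h
    have hγb : γ ≤ t₀ ^ 2 := by
      rw [hγdef, div_le_iff₀ h1mα0']
      nlinarith
    have hsγ : Real.sqrt γ ≤ t₀ := by
      have h := Real.sqrt_le_sqrt hγb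
      rwa [Real.sqrt_sq ht₀0.le] at h
    intro t
    have hK0 : (0:ℝ) ≤ Real.sqrt γ * (2 / (1 - β / 2)) := by positivity
    have hKb : Real.sqrt γ * (2 / (1 - β / 2)) ≤ 4 * t₀ * (1 / (2 - β)) := by
      have hc : 2 / (1 - β / 2) = 4 / (2 - β) := by
        rw [div_eq_div_iff he0.ne' h2β.ne']
        ring
      rw [hc]
      have h1 : (0:ℝ) ≤ 4 / (2 - β) := by positivity
      calc Real.sqrt γ * (4 / (2 - β)) ≤ t₀ * (4 / (2 - β)) :=
            mul_le_mul_of_nonneg_right hsγ h1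
        _ = 4 * t₀ * (1 / (2 - β)) := by ring
    have hs2 : (0:ℝ) < 1 / (2 - β) := by positivity
    have hnum := stmt16_numeric ht₀ hs2
    have hM : 1 + Real.sqrt γ * (2 / (1 - β / 2)) ≤ (t₀ + 3) * Real.exp (8 + 3 / (2 - β)) := by
      have h38 : (8:ℝ) + 3 * (1 / (2 - β)) = 8 + 3 / (2 - β) := by ring
      rw [h38] at hnum
      linarith
    have hTe1 : (1:ℝ) ≤ ((t : ℝ) + t₀) ^ (1 - β / 2) := Real.one_le_rpow (hT1 t) he0.le
    have hTe0 : (0:ℝ) < ((t : ℝ) + t₀) ^ (1 - β / 2) := Real.rpow_pos_of_pos (hTpos t) _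
    have ht₀e : (0:ℝ) ≤ t₀ ^ (1 - β / 2) := Real.rpow_nonneg ht₀0.le _
    have hFt : 1 / Real.sqrt (lam t)
        ≤ (1 + Real.sqrt γ * (2 / (1 - β / 2))) * ((t : ℝ) + t₀) ^ (1 - β / 2) := by
      have h := hF t
      nlinarith [mul_nonneg hK0 ht₀e, mul_le_mul_of_nonneg_left hTe1 hK0]
    have hsl : 0 < Real.sqrt (lam t) := Real.sqrt_pos.mpr (hlampos t)
    have hMpos : 0 < (1 + Real.sqrt γ * (2 / (1 - β / 2))) * ((t : ℝ) + t₀) ^ (1 - β / 2) :=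
      mul_pos (by linarith) hTe0
    have hsl2 : 1 / ((1 + Real.sqrt γ * (2 / (1 - β / 2))) * ((t : ℝ) + t₀) ^ (1 - β / 2))
        ≤ Real.sqrt (lam t) := by
      rw [div_le_iff₀ hMpos]
      rw [div_le_iff₀ hsl] at hFt
      nlinarith
    have hTT : ((t : ℝ) + t₀) ^ (1 - β / 2) * ((t : ℝ) + t₀) ^ (1 - β / 2)
        = ((t : ℝ) + t₀) ^ (2 - β) := by
      rw [← Real.rpow_add (hTpos t)]
      ring_nf
    have hT2β : 0 < ((t : ℝ) + t₀) ^ (2 - β) := Real.rpow_pos_of_pos (hTpos t) _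
    have hlow : 1 / ((1 + Real.sqrt γ * (2 / (1 - β / 2))) ^ 2 * ((t : ℝ) + t₀) ^ (2 - β))
        ≤ lam t := by
      have h2 := mul_le_mul hsl2 hsl2 (by positivity) hsl.le
      rw [Real.mul_self_sqrt (hlampos t).le] at h2
      have h3 : (1 / ((1 + Real.sqrt γ * (2 / (1 - β / 2))) * ((t : ℝ) + t₀) ^ (1 - β / 2)))
          * (1 / ((1 + Real.sqrt γ * (2 / (1 - β / 2))) * ((t : ℝ) + t₀) ^ (1 - β / 2)))
          = 1 / ((1 + Real.sqrt γ * (2 / (1 - β / 2))) ^ 2 * ((t : ℝ) + t₀) ^ (2 - β)) := by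
        rw [← hTT]
        field_simp
      rw [h3] at h2
      exact h2
    have hexp2 : Real.exp (8 + 3 / (2 - β)) ^ 2 = Real.exp (16 + 6 / (2 - β)) := by
      rw [sq, ← Real.exp_add]
      congr 1
      ring
    have hsqK : (1 + Real.sqrt γ * (2 / (1 - β / 2))) ^ 2
        ≤ (t₀ + 3) ^ 2 * Real.exp (16 + 6 / (2 - β)) := by
      have h1 : (1 + Real.sqrt γ * (2 / (1 - β / 2))) ^ 2
          ≤ ((t₀ + 3) * Real.exp (8 + 3 / (2 - β))) ^ 2 :=
        pow_le_pow_left₀ (by linarith) hM 2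
      rwa [mul_pow, hexp2] at h1
    have hpos2 : 0 < (1 + Real.sqrt γ * (2 / (1 - β / 2))) ^ 2 := by positivity
    rw [ge_iff_le]
    calc 1 / ((t₀ + 3) ^ 2 * Real.exp (16 + 6 / (2 - β))) / ((t : ℝ) + t₀) ^ (2 - β)
        ≤ 1 / (1 + Real.sqrt γ * (2 / (1 - β / 2))) ^ 2 / ((t : ℝ) + t₀) ^ (2 - β) := by
          apply div_le_div_of_nonneg_right ?_ hT2β.le
          exact one_div_le_one_div_of_le hpos2 hsqK
      _ = 1 / ((1 + Real.sqrt γ * (2 / (1 - β / 2))) ^ 2 * ((t : ℝ) + t₀) ^ (2 - β)) := by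
          rw [div_div]
      _ ≤ lam t := hlow
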